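/- arXiv:1108.6328 — 7 statements merged into one kernel-verified Lean document; each statement's English description precedes it below -/
import Mathlib

section
/- If c' is less restrictive than c, then the result of the conjunctive query Q^{P,S,c} over a Web of Linked Data W is a subset of the result of Q^{P,S,c'} over W. -/
/-- A Web of Linked Data `W = (D, data, adoc)`:
`D` a countable set of documents, `data` assigns each document a finite set of
triples, `adoc` a partial surjective map from identifiers to documents. -/
structure Web (Doc U T : Type) where
  D : Set Doc
  data : Doc → Finset T
  adoc : U → Option Doc
  countable : D.Countable
  adoc_mem : ∀ u d, adoc u = some d → d ∈ D
  adoc_surj : ∀ d ∈ D, ∃ u, adoc u = some d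

section
variable {Doc U T TP V A : Type}

/-- All data triples of a Web of Linked Data. -/
def Web.AllData (W : Web Doc U T) : Set T :=
  ⋃ d ∈ W.D, (W.data d : Set T)

/-- `W'` is an induced subweb of `W`. -/
def InducedSubweb (W' W : Web Doc U T) : Prop :=
  W'.D ⊆ W.D ∧
  (∀ d ∈ W'.D, W'.data d = W.data d) ∧
  (∀ u d, W.adoc u = some d → d ∈ W'.D → W'.adoc u = some d) ∧
  (∀ u d, W'.adoc u = some d → W.adoc u = some d)

/-- `(c,P)`-reachability from a seed set `S` in `W`; `ids t` is the finite set of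
identifiers occurring in triple `t`, `c` a reachability criterion. -/
inductive Reachable (W : Web Doc U T) (ids : T → Finset U)
    (c : T → U → Finset TP → Bool) (S : Set U) (P : Finset TP) : Doc → Prop
  | base {u : U} {d : Doc} : u ∈ S → W.adoc u = some d → Reachable W ids c S P d
  | step {d' : Doc} {t : T} {u : U} {d : Doc} :
      Reachable W ids c S P d' → t ∈ W.data d' → u ∈ ids t →
      c t u P = true → W.adoc u = some d → Reachable W ids c S P d

/-- The set of documents of the `(S,c,P)`-reachable part of `W`. -/
def ReachSet (W : Web Doc U T) (ids : T → Finset U)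
    (c : T → U → Finset TP → Bool) (S : Set U) (P : Finset TP) : Set Doc :=
  {d | Reachable W ids c S P d}

/-- All data of the `(S,c,P)`-reachable part of `W`. -/
def ReachData (W : Web Doc U T) (ids : T → Finset U)
    (c : T → U → Finset TP → Bool) (S : Set U) (P : Finset TP) : Set T :=
  ⋃ d ∈ ReachSet W ids c S P, (W.data d : Set T)

/-- The variables occurring in a set of triple patterns. -/
def varsOf (vars : TP → Finset V) (Q : Finset TP) : Set V :=
  ⋃ tp ∈ (Q : Set TP), (vars tp : Set V)

/-- The result of the conjunctive query `Q^{P,S,c}` over `W`: all valuations `μ`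
with `dom μ = vars P` such that `μ[P] ⊆ AllData(R)`, `R` the reachable part.
`app μ tp` applies valuation `μ` to pattern `tp` (yielding a data triple). -/
def QueryResult (W : Web Doc U T) (ids : T → Finset U)
    (c : T → U → Finset TP → Bool) (S : Set U) (P : Finset TP)
    (vars : TP → Finset V) (app : (V → Option A) → TP → Option T) :
    Set (V → Option A) :=
  { μ | (∀ v, (μ v).isSome ↔ v ∈ varsOf vars P) ∧
        ∀ tp ∈ P, ∃ t ∈ ReachData W ids c S P, app μ tp = some t }

/-- A partial solution `(P₁, μ)` for `Q^{P,S,c}` in `W`. -/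
def PartialSolution (W : Web Doc U T) (ids : T → Finset U)
    (c : T → U → Finset TP → Bool) (S : Set U) (P : Finset TP)
    (vars : TP → Finset V) (app : (V → Option A) → TP → Option T)
    (P₁ : Finset TP) (μ : V → Option A) : Prop :=
  P₁ ⊆ P ∧ (∀ v, (μ v).isSome ↔ v ∈ varsOf vars P₁) ∧
  ∀ tp ∈ P₁, ∃ t ∈ ReachData W ids c S P, app μ tp = some t

/-- `Δ(μ,W)`: documents obtained by dereferencing identifiers bound by `μ`;
`toId a` extracts the identifier from `a` (if `a` is an identifier). -/
def Delta (W : Web Doc U T) (toId : A → Option U) (μ : V → Option A) : Set Doc :=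
  {d | ∃ v a u, μ v = some a ∧ toId a = some u ∧ W.adoc u = some d}

/-- `(P₁', μ')` is the `(t,tp)`-augmentation of `(P₁, μ)`. -/
def IsAug [DecidableEq TP] (vars : TP → Finset V)
    (app : (V → Option A) → TP → Option T)
    (P₁ : Finset TP) (μ : V → Option A) (t : T) (tp : TP)
    (P₁' : Finset TP) (μ' : V → Option A) : Prop :=
  P₁' = insert tp P₁ ∧ app μ' tp = some t ∧
  (∀ tp' ∈ P₁, app μ' tp' = app μ tp') ∧
  (∀ v, (μ' v).isSome ↔ v ∈ varsOf vars P₁')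

-- The reachability criterion `c_Match`: follow `u` in `t` iff `t` matches some
-- triple pattern of the query.
open scoped Classical in
noncomputable def cMatch (app : (V → Option A) → TP → Option T) :
    T → U → Finset TP → Bool :=
  fun t _ P => decide (∃ tp ∈ P, ∃ ν : V → Option A, app ν tp = some t)

/-- States `(𝔓, 𝔇)` arising during an execution of `ltbExec(S,P,W)`. -/
inductive ExecState [DecidableEq TP] (W : Web Doc U T) (toId : A → Option U)
    (S : Set U) (P : Finset TP) (vars : TP → Finset V)
    (app : (V → Option A) → TP → Option T) :
    Set (Finset TP × (V → Option A)) → Web Doc U T → Prop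
  | init (W0 : Web Doc U T) :
      InducedSubweb W0 W →
      W0.D = {d | ∃ u ∈ S, W.adoc u = some d} →
      ExecState W toId S P vars app {((∅ : Finset TP), fun _ => none)} W0
  | step {PP : Set (Finset TP × (V → Option A))} {DD : Web Doc U T}
      (P₁ : Finset TP) (μ : V → Option A) (t : T) (tp : TP)
      (P₁' : Finset TP) (μ' : V → Option A) (DD' : Web Doc U T) :
      ExecState W toId S P vars app PP DD →
      (P₁, μ) ∈ PP → t ∈ DD.AllData → tp ∈ P → tp ∉ P₁ →
      IsAug vars app P₁ μ t tp P₁' μ' →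
      (P₁', μ') ∉ PP →
      InducedSubweb DD' W → DD'.D = DD.D ∪ Delta W toId μ' →
      ExecState W toId S P vars app (PP ∪ {(P₁', μ')}) DD'

end

lemma reachable_mono' {Doc U T TP : Type} (W : Web Doc U T) (ids : T → Finset U)
    (c c' : T → U → Finset TP → Bool) (S : Set U) (P : Finset TP)
    (h : ∀ t u Q, c t u Q = true → c' t u Q = true) {d : Doc}
    (hd : Reachable W ids c S P d) : Reachable W ids c' S P d := by
  induction hd with
  | base hu ha => exact Reachable.base hu ha
  | step _ ht' hu hc ha ih => exact Reachable.step ih ht' hu (h _ _ _ hc) ha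

/-- If `c'` is less restrictive than `c`, then the result of
`Q^{P,S,c}` is a subset of the result of `Q^{P,S,c'}`. -/
theorem queryResult_mono {Doc U T TP V A : Type}
    (W : Web Doc U T) (ids : T → Finset U)
    (c c' : T → U → Finset TP → Bool) (S : Set U) (P : Finset TP)
    (vars : TP → Finset V) (app : (V → Option A) → TP → Option T)
    (h : ∀ t u Q, c t u Q = true → c' t u Q = true) :
    QueryResult W ids c S P vars app ⊆ QueryResult W ids c' S P vars app := by
  rintro μ ⟨hdom, hP⟩
  refine ⟨hdom, fun tp htp => ?_⟩
  obtain ⟨t, ht, happ⟩ := hP tp htp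
  refine ⟨t, ?_, happ⟩
  simp only [ReachData, Set.mem_iUnion] at ht ⊢
  obtain ⟨d, hd, htd⟩ := ht
  exact ⟨d, reachable_mono' W ids c c' S P h hd, htd⟩
end

section
/- Expansion stays within the reachable part under c_Match-semantics: let σ = (P₁, μ) be a partial solution for Q^{P,S,c_Match} in W, and let D' be a discovered part of W that is an induced subweb of the (S, c_Match, P)-reachable part R of W. Then the μ-expansion of D' in W is also an induced subweb of R. -/
/-- Under `c_Match`-semantics, expanding a discovered part inside
the reachable part by the valuation of a partial solution stays inside the
reachable part. `hids` links pattern application to identifier occurrence. -/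
theorem expansion_bounded_cMatch {Doc U T TP V A : Type} [DecidableEq TP]
    (W W1 W2 : Web Doc U T) (ids : T → Finset U) (toId : A → Option U)
    (S : Set U) (P : Finset TP) (vars : TP → Finset V)
    (app : (V → Option A) → TP → Option T)
    (hids : ∀ (ν : V → Option A) (tp : TP) (t : T) (v : V) (a : A) (u : U),
      app ν tp = some t → v ∈ vars tp → ν v = some a → toId a = some u →
      u ∈ ids t)
    (P₁ : Finset TP) (μ : V → Option A)
    (hps : PartialSolution W ids (cMatch app) S P vars app P₁ μ)
    (h1 : InducedSubweb W1 W) (hfin : W1.D.Finite)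
    (hreach : W1.D ⊆ ReachSet W ids (cMatch app) S P)
    (h2 : InducedSubweb W2 W) (hD : W2.D = W1.D ∪ Delta W toId μ) :
    W2.D ⊆ ReachSet W ids (cMatch app) S P := by
  rw [hD]
  rintro d (hd | ⟨v, a, u, hv, ha, hu⟩)
  · exact hreach hd
  · obtain ⟨hsub, hdom, hmatch⟩ := hps
    have hv' : v ∈ varsOf vars P₁ := (hdom v).mp (by rw [hv]; rfl)
    obtain ⟨tp, htp, hvtp⟩ := by
      simpa [varsOf, Set.mem_iUnion] using hv'
    obtain ⟨t, ht, happ⟩ := hmatch tp htp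
    obtain ⟨d', hd', htd⟩ := by
      simpa [ReachData, Set.mem_iUnion] using ht
    have huid : u ∈ ids t := hids μ tp t v a u happ hvtp hv ha
    have hc : cMatch app t u P = true := by
      simp only [cMatch, decide_eq_true_eq]
      exact ⟨tp, hsub htp, μ, happ⟩
    exact Reachable.step hd' htd huid hc hu
end

section
/- Soundness of link traversal based execution: any valuation μ reported by an execution of the abstract procedure ltbExec(S, P, W) is a solution for the conjunctive query Q^{P,S,c_Match} over W, i.e., μ ∈ Q^{P,S,c_Match}(W). -/
/-- Soundness of link traversal based query execution: any
valuation `μ` reported by `ltbExec(S,P,W)` (i.e. such that `(P,μ)` occurs in the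
set of constructed partial solutions of a reachable execution state) is a
solution of `Q^{P,S,c_Match}` over `W`. -/
theorem ltbExec_sound {Doc U T TP V A : Type} [DecidableEq TP]
    (W : Web Doc U T) (ids : T → Finset U) (toId : A → Option U)
    (S : Set U) (hS : S.Finite) (P : Finset TP) (vars : TP → Finset V)
    (app : (V → Option A) → TP → Option T)
    (hids : ∀ (ν : V → Option A) (tp : TP) (t : T) (v : V) (a : A) (u : U),
      app ν tp = some t → v ∈ vars tp → ν v = some a → toId a = some u →
      u ∈ ids t) :
    ∀ (PP : Set (Finset TP × (V → Option A))) (DD : Web Doc U T)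
      (μ : V → Option A),
      ExecState W toId S P vars app PP DD → (P, μ) ∈ PP →
      μ ∈ QueryResult W ids (cMatch app) S P vars app := by
  intro PP DD μ hexec hmem
  suffices h : (∀ p ∈ PP, PartialSolution W ids (cMatch app) S P vars app p.1 p.2)
      ∧ DD.D ⊆ ReachSet W ids (cMatch app) S P ∧ InducedSubweb DD W by
    obtain ⟨-, h2, h3⟩ := h.1 (P, μ) hmem
    exact ⟨h2, h3⟩
  clear hmem
  induction hexec with
  | init W0 hsub hD =>
    refine ⟨?_, ?_, hsub⟩
    · intro p hp
      simp only [Set.mem_singleton_iff] at hp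
      subst hp
      refine ⟨Finset.empty_subset _, ?_, ?_⟩
      · intro v; simp [varsOf]
      · intro tp htp; simp at htp
    · intro d hd
      rw [hD] at hd
      obtain ⟨u, hu, ha⟩ := hd
      exact Reachable.base hu ha
  | step P₁ μ₀ t tp P₁' μ' DD' hexec hmemP ht htp htpn haug hnew hsub' hD ih =>
    obtain ⟨ihP, ihD, ihsub⟩ := ih
    obtain ⟨hPeq, happt, happold, hdom⟩ := haug
    -- t is in the reachable data
    have htR : t ∈ ReachData W ids (cMatch app) S P := by
      obtain ⟨s, ⟨d, rfl⟩, hs⟩ := ht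
      obtain ⟨s', ⟨hd, rfl⟩, hts⟩ := hs
      refine Set.mem_biUnion (ihD hd) ?_
      rwa [← ihsub.2.1 d hd]
    -- the augmentation is a partial solution
    have hps' : PartialSolution W ids (cMatch app) S P vars app P₁' μ' := by
      refine ⟨?_, hdom, ?_⟩
      · rw [hPeq]
        exact Finset.insert_subset htp (ihP (P₁, μ₀) hmemP).1
      · intro tp' htp'
        rw [hPeq] at htp'
        rcases Finset.mem_insert.mp htp' with h | h
        · subst h; exact ⟨t, htR, happt⟩
        · obtain ⟨t', ht', ha⟩ := (ihP (P₁, μ₀) hmemP).2.2 tp' h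
          exact ⟨t', ht', (happold tp' h).trans ha⟩
    refine ⟨?_, ?_, hsub'⟩
    · intro p hp
      rcases hp with hp | hp
      · exact ihP p hp
      · simp only [Set.mem_singleton_iff] at hp
        subst hp
        exact hps'
    · rw [hD]
      refine Set.union_subset ihD ?_
      intro d hd
      obtain ⟨v, a, u, hva, hau, hud⟩ := hd
      have hv : (μ' v).isSome := by rw [hva]; rfl
      rw [hdom v] at hv
      simp only [varsOf, Set.mem_iUnion, Finset.mem_coe] at hv
      obtain ⟨tp'', htp'', hv'⟩ := hv
      obtain ⟨t'', ht''mem, happ''⟩ := hps'.2.2 tp'' htp''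
      have hu : u ∈ ids t'' := hids μ' tp'' t'' v a u happ'' hv' hva hau
      obtain ⟨s, ⟨d', rfl⟩, hs⟩ := ht''mem
      obtain ⟨s', ⟨hd', rfl⟩, ht''d'⟩ := hs
      have hc : cMatch app t'' u P = true := by
        classical
        unfold cMatch
        exact decide_eq_true ⟨tp'', hps'.1 htp'', μ', happ''⟩
      exact Reachable.step hd' ht''d' hu hc hud
end

section
/- Invariant of ltbExec: at every state (𝔓, 𝔇) arising during an execution of ltbExec(S, P, W), every σ ∈ 𝔓 is a partial solution for Q^{P,S,c_Match} in W, and 𝔇 is a finite induced subweb of the (S, c_Match, P)-reachable part of W. -/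
/-- Invariant of `ltbExec`: in every reachable execution state
`(𝔓,𝔇)`, every element of `𝔓` is a partial solution for `Q^{P,S,c_Match}` in `W`
and `𝔇` is a finite induced subweb of the `(S,c_Match,P)`-reachable part of `W`. -/
theorem ltbExec_invariant {Doc U T TP V A : Type} [DecidableEq TP]
    (W : Web Doc U T) (ids : T → Finset U) (toId : A → Option U)
    (S : Set U) (hS : S.Finite) (P : Finset TP) (vars : TP → Finset V)
    (app : (V → Option A) → TP → Option T)
    (hids : ∀ (ν : V → Option A) (tp : TP) (t : T) (v : V) (a : A) (u : U),
      app ν tp = some t → v ∈ vars tp → ν v = some a → toId a = some u →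
      u ∈ ids t) :
    ∀ (PP : Set (Finset TP × (V → Option A))) (DD : Web Doc U T),
      ExecState W toId S P vars app PP DD →
      (∀ σ ∈ PP, PartialSolution W ids (cMatch app) S P vars app σ.1 σ.2) ∧
      InducedSubweb DD W ∧ DD.D.Finite ∧
      DD.D ⊆ ReachSet W ids (cMatch app) S P := by
  intro PP DD h
  induction h with
  | init W0 hsub hD =>
    refine ⟨?_, hsub, ?_, ?_⟩
    · rintro σ hσ
      simp only [Set.mem_singleton_iff] at hσ
      subst hσ
      refine ⟨Finset.empty_subset _, ?_, ?_⟩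
      · intro v; simp [varsOf]
      · intro tp htp; simp at htp
    · rw [hD]
      have hsub2 : {d | ∃ u ∈ S, W.adoc u = some d} ⊆
          ⋃ u ∈ S, {d | W.adoc u = some d} := by
        rintro d ⟨u, hu, hu2⟩; exact Set.mem_biUnion hu hu2
      refine Set.Finite.subset (Set.Finite.biUnion hS ?_) hsub2
      intro u _
      apply Set.Subsingleton.finite
      rintro x hx y hy
      simp only [Set.mem_setOf_eq] at hx hy
      rw [hx] at hy; exact Option.some.inj hy
    · rw [hD]
      rintro d ⟨u, hu, hu2⟩
      exact Reachable.base hu hu2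
  | step P₁ μ t tp P₁' μ' DD' hprev hmem ht htpP htpnot haug hnew hsub' hD' ih =>
    obtain ⟨ihps, ihsub, ihfin, ihreach⟩ := ih
    obtain ⟨hP₁'eq, happt, happold, hdom⟩ := haug
    obtain ⟨hsub1, hdom1, hsol1⟩ := ihps (P₁, μ) hmem
    -- data of DD is in ReachData
    have htRD : t ∈ ReachData W ids (cMatch app) S P := by
      obtain ⟨s, ⟨d, rfl⟩, hts⟩ := ht
      obtain ⟨s2, ⟨hd, rfl⟩, ht2⟩ := hts
      have hdata := ihsub.2.1 d hd
      refine Set.mem_biUnion (ihreach hd) ?_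
      rw [← hdata]; exact ht2
    have hps' : PartialSolution W ids (cMatch app) S P vars app P₁' μ' := by
      refine ⟨?_, hdom, ?_⟩
      · rw [hP₁'eq]; exact Finset.insert_subset htpP hsub1
      · intro tp' htp'
        rw [hP₁'eq] at htp'
        rcases Finset.mem_insert.mp htp' with rfl | htp'
        · exact ⟨t, htRD, happt⟩
        · obtain ⟨t', ht', happ'⟩ := hsol1 tp' htp'
          exact ⟨t', ht', (happold tp' htp').trans happ'⟩
    refine ⟨?_, hsub', ?_, ?_⟩
    · rintro σ hσ
      rcases hσ with hσ | hσ
      · exact ihps σ hσ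
      · simp only [Set.mem_singleton_iff] at hσ; subst hσ; exact hps'
    · rw [hD']
      refine ihfin.union ?_
      have hvfin : (varsOf vars P₁').Finite :=
        Set.Finite.biUnion P₁'.finite_toSet (fun tp _ => (vars tp).finite_toSet)
      have hsubD : Delta W toId μ' ⊆ ⋃ v ∈ varsOf vars P₁',
          {d | ∃ a u, μ' v = some a ∧ toId a = some u ∧ W.adoc u = some d} := by
        rintro d ⟨v, a, u, h1, h2, h3⟩
        have hv : v ∈ varsOf vars P₁' := (hdom v).mp (by simp [h1])
        exact Set.mem_biUnion hv ⟨a, u, h1, h2, h3⟩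
      refine Set.Finite.subset (Set.Finite.biUnion hvfin ?_) hsubD
      intro v _
      apply Set.Subsingleton.finite
      rintro x ⟨a, u, h1, h2, h3⟩ y ⟨a', u', h1', h2', h3'⟩
      rw [h1] at h1'
      cases Option.some.inj h1'
      rw [h2] at h2'
      cases Option.some.inj h2'
      rw [h3] at h3'
      exact Option.some.inj h3'
    · rw [hD']
      rintro d (hd | hd)
      · exact ihreach hd
      · obtain ⟨v, a, u, h1, h2, h3⟩ := hd
        have hv : v ∈ varsOf vars P₁' := (hdom v).mp (by simp [h1])
        obtain ⟨s, ⟨tp', rfl⟩, hvs⟩ := hv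
        obtain ⟨s2, ⟨htp', rfl⟩, hv2⟩ := hvs
        obtain ⟨t', ht'RD, happ'⟩ := hps'.2.2 tp' htp'
        obtain ⟨s3, ⟨d', rfl⟩, ht's⟩ := ht'RD
        obtain ⟨s4, ⟨hd', rfl⟩, ht'2⟩ := ht's
        have hu : u ∈ ids t' := hids μ' tp' t' v a u happ' hv2 h1 h2
        have hc : cMatch app t' u P = true := by
          simp only [cMatch, decide_eq_true_eq]
          exact ⟨tp', hps'.1 htp', μ', happ'⟩
        exact Reachable.step hd' ht'2 hu hc h3
end

section
/- In the monotone expand-and-match computation of a (P,S,c)-machine, every triple on the link traversal tape comes from the reachable part: for every iteration j, the set T_j of data triples encoded on the link traversal tape at the start of iteration j satisfies T_j ⊆ AllData(R), where R is the (S,c,P)-reachable part of W. Consequently every valuation in Ω_j = { μ | dom(μ) = vars(P), μ[P] ⊆ T_j } is a solution: Ω_j ⊆ Q^{P,S,c}(W). -/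
/-- In the computation of a `(P,S,c)`-machine, modelled by an
admissible dereferencing sequence `u`, every triple on the link traversal tape
comes from the reachable part, and hence every valuation in `Ω_j` is a solution. -/
theorem machine_tape_sound {Doc U T TP V A : Type}
    (W : Web Doc U T) (ids : T → Finset U) (c : T → U → Finset TP → Bool)
    (S : Set U) (P : Finset TP) (vars : TP → Finset V)
    (app : (V → Option A) → TP → Option T) (u : ℕ → U)
    (hseq : ∀ n, u n ∈ S ∨ ∃ m < n, ∃ d t, W.adoc (u m) = some d ∧
      t ∈ W.data d ∧ u n ∈ ids t ∧ c t (u n) P = true) :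
    (∀ j, {t | ∃ m < j, ∃ d, W.adoc (u m) = some d ∧ t ∈ W.data d} ⊆
      ReachData W ids c S P) ∧
    (∀ (j : ℕ) (μ : V → Option A),
      ((∀ v, (μ v).isSome ↔ v ∈ varsOf vars P) ∧
       ∀ tp ∈ P, ∃ t ∈ {t | ∃ m < j, ∃ d, W.adoc (u m) = some d ∧ t ∈ W.data d},
         app μ tp = some t) →
      μ ∈ QueryResult W ids c S P vars app) := by
  have key : ∀ m d, W.adoc (u m) = some d → Reachable W ids c S P d := by
    intro m
    induction m using Nat.strong_induction_on with
    | _ m ih =>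
      intro d hd
      rcases hseq m with hS | ⟨k, hk, d', t, hd', ht, hut, hc⟩
      · exact Reachable.base hS hd
      · exact Reachable.step (ih k hk d' hd') ht hut hc hd
  have hsub : ∀ j, {t | ∃ m < j, ∃ d, W.adoc (u m) = some d ∧ t ∈ W.data d} ⊆
      ReachData W ids c S P := by
    intro j t ⟨m, _, d, hd, ht⟩
    exact Set.mem_biUnion (key m d hd) ht
  refine ⟨hsub, fun j μ ⟨h1, h2⟩ => ⟨h1, fun tp htp => ?_⟩⟩
  obtain ⟨t, ht, happ⟩ := h2 tp htp
  exact ⟨t, hsub j ht, happ⟩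
end

section
/- Completeness of the expand procedure: for every data triple t ∈ AllData(R), where R is the (S,c,P)-reachable part of W, a fair dereferencing process (one that eventually dereferences every identifier u occurring in an already-obtained triple t' with c(t',u,P) = true, starting from dereferencing all of S) eventually obtains t; formally, there exists an index j such that t ∈ T_j for all j' ≥ j, where T_j is the union of data(adoc(u)) over the first j dereferenced identifiers. -/
/-- Completeness of the expand procedure: a fair admissible
dereferencing process eventually obtains every triple of the reachable part. -/
theorem fair_dereferencing_complete {Doc U T TP : Type}
    (W : Web Doc U T) (ids : T → Finset U) (c : T → U → Finset TP → Bool)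
    (S : Set U) (P : Finset TP) (u : ℕ → U)
    (hseq : ∀ n, u n ∈ S ∨ ∃ m < n, ∃ d t, W.adoc (u m) = some d ∧
      t ∈ W.data d ∧ u n ∈ ids t ∧ c t (u n) P = true)
    (hinit : ∀ s ∈ S, ∃ n, u n = s)
    (hfair : ∀ (v : U) (t : T) (m : ℕ) (d : Doc), W.adoc (u m) = some d →
      t ∈ W.data d → v ∈ ids t → c t v P = true → ∃ n, u n = v) :
    ∀ t ∈ ReachData W ids c S P, ∃ j, ∀ j' ≥ j,
      t ∈ {t' | ∃ m < j', ∃ d, W.adoc (u m) = some d ∧ t' ∈ W.data d} := by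
  have key : ∀ d, Reachable W ids c S P d → ∃ m, W.adoc (u m) = some d := by
    intro d hd
    induction hd with
    | base hs ha =>
      obtain ⟨n, hn⟩ := hinit _ hs
      exact ⟨n, by rw [hn]; exact ha⟩
    | step hr ht hi hc ha ih =>
      obtain ⟨m, hm⟩ := ih
      obtain ⟨n, hn⟩ := hfair _ _ m _ hm ht hi hc
      exact ⟨n, by rw [hn]; exact ha⟩
  intro t ht
  simp only [ReachData, Set.mem_iUnion] at ht
  obtain ⟨d, hd, htd⟩ := ht
  obtain ⟨m, hm⟩ := key d hd
  exact ⟨m + 1, fun j' hj' => ⟨m, lt_of_lt_of_le (Nat.lt_succ_self m) hj', d, hm, htd⟩⟩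
end

section
/- In the iterator-based execution, every partial solution emitted by iterator I_k covers exactly the first k triple patterns: for any partial solution (P', μ) output by I_k it holds P' = {tp₁, …, tp_k}. In particular, every valuation reported by the last iterator I_n is a valuation μ with dom(μ) = vars(P) such that (P, μ) is a partial solution, hence μ ∈ Q^{P,S,c_Match}(W). -/
/-- In the iterator-based execution, every partial solution emitted
by iterator `I_k` covers exactly the first `k` triple patterns; hence every
valuation of an output of the last iterator `I_n` is a solution of
`Q^{P,S,c_Match}` over `W`. -/
theorem iterator_covers_prefix {Doc U T TP V A : Type} [DecidableEq TP]
    (W : Web Doc U T) (ids : T → Finset U) (S : Set U)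
    (vars : TP → Finset V) (app : (V → Option A) → TP → Option T)
    (n : ℕ) (tps : ℕ → TP) (P : Finset TP)
    (hP : P = (Finset.Icc 1 n).image tps)
    (Out : ℕ → Set (Finset TP × (V → Option A)))
    (h0 : Out 0 = {((∅ : Finset TP), fun _ => (none : Option A))})
    (hstep : ∀ k < n, ∀ σ' ∈ Out (k + 1), ∃ σ ∈ Out k, ∃ t : T,
      IsAug vars app σ.1 σ.2 t (tps (k + 1)) σ'.1 σ'.2)
    (hps : ∀ k ≤ n, ∀ σ ∈ Out k,
      PartialSolution W ids (cMatch app) S P vars app σ.1 σ.2) :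
    (∀ k ≤ n, ∀ σ ∈ Out k, σ.1 = (Finset.Icc 1 k).image tps) ∧
    (∀ σ ∈ Out n, σ.2 ∈ QueryResult W ids (cMatch app) S P vars app) := by
    have key : ∀ k ≤ n, ∀ σ ∈ Out k, σ.1 = (Finset.Icc 1 k).image tps := by
      intro k
      induction k with
      | zero =>
        intro _ σ hσ
        rw [h0] at hσ
        rw [Set.mem_singleton_iff] at hσ
        simp [hσ]
      | succ k ih =>
        intro hk σ' hσ'
        obtain ⟨σ, hσ, t, haug⟩ := hstep k (by omega) σ' hσ'
        have h1 := ih (by omega) σ hσ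
        rw [haug.1, h1]
        have : Finset.Icc 1 (k+1) = insert (k+1) (Finset.Icc 1 k) := by
          ext x; simp [Finset.mem_Icc]; omega
        rw [this, Finset.image_insert]
    refine ⟨key, ?_⟩
    intro σ hσ
    have hps' := hps n le_rfl σ hσ
    have h1 : σ.1 = P := by rw [key n le_rfl σ hσ, hP]
    obtain ⟨-, hdom, htp⟩ := hps'
    rw [h1] at hdom htp
    exact ⟨hdom, htp⟩
end
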